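/- Chaining distributes over minimum on the left in the FIFO setting: if g satisfies FIFO, then for all TTFs f₁, f₂ and all τ, (min(f₁,f₂) ⊕ g)(τ) = min((f₁ ⊕ g)(τ), (f₂ ⊕ g)(τ)). -/

import Mathlib

/-- FIFO (no-overtaking) property of a travel-time function. -/
def FIFO (f : ℝ → ℝ) : Prop := ∀ ⦃τ τ' : ℝ⦄, τ < τ' → τ + f τ ≤ τ' + f τ'

/-- Chaining of two travel-time functions. -/
def chain (f g : ℝ → ℝ) : ℝ → ℝ := fun τ => f τ + g (τ + f τ)

/-- A path from `s` to `t` in the graph with edge relation `E`, given as its vertex list. -/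
def IsPath {V : Type*} (E : V → V → Prop) (s t : V) (p : List V) : Prop :=
  p.head? = some s ∧ p.getLast? = some t ∧ p.Chain' E

/-- Arrival time along a vertex list with time-dependent edge costs `c`, via iterated chaining. -/
def arriveP {V : Type*} (c : V → V → ℝ → ℝ) : List V → ℝ → ℝ
  | [], τ => τ
  | [_], τ => τ
  | u :: w :: rest, τ => arriveP c (w :: rest) (τ + c u w τ)

lemma fifo_mono {g : ℝ → ℝ} (hg : FIFO g) {a b : ℝ} (h : a ≤ b) :
    a + g a ≤ b + g b := by
  rcases eq_or_lt_of_le h with rfl | h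
  · exact le_rfl
  · exact hg h

theorem chain_min_left_distrib (g f₁ f₂ : ℝ → ℝ) (hg : FIFO g) :
    ∀ τ : ℝ, chain (fun τ => min (f₁ τ) (f₂ τ)) g τ = min (chain f₁ g τ) (chain f₂ g τ) := by
  intro τ
  rcases le_total (f₁ τ) (f₂ τ) with h | h
  · have hm : min (f₁ τ) (f₂ τ) = f₁ τ := min_eq_left h
    have key := fifo_mono hg (show τ + f₁ τ ≤ τ + f₂ τ by linarith)
    simp only [chain, hm]
    rw [min_eq_left]
    linarith
  · have hm : min (f₁ τ) (f₂ τ) = f₂ τ := min_eq_right h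
    have key := fifo_mono hg (show τ + f₂ τ ≤ τ + f₁ τ by linarith)
    simp only [chain, hm]
    rw [min_eq_right]
    linarith
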